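/- Proposition 3 (Krum is not dimensional Byzantine-resilient): Fix integers m, q, d with 2q + 2 < m and m ≤ d. Define the Krum score of index i on inputs w_1, …, w_m ∈ ℝ^d as s(i) = min over subsets N ⊆ {1,…,m}\{i} with |N| = m − q − 2 of Σ_{j∈N} ‖w_i − w_j‖² (the sum of squared distances to the m−q−2 nearest neighbors of w_i), and let Krum(w_1,…,w_m) = w_k for any k attaining the minimal score (any fixed tie-breaking rule). Then for every g ∈ ℝ^d, every v_1, …, v_m ∈ ℝ^d and every constant C > 0, there exist ṽ_1, …, ṽ_m ∈ ℝ^d such that each ṽ_i differs from v_i only in its i-th coordinate (at most one Byzantine value per dimension) and ‖Krum(ṽ_1, …, ṽ_m) − g‖² > C. -/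

import Mathlib

/-- The Krum score of index `i` on inputs `w : Fin m → ℝ^d` with `q` assumed Byzantine
workers: the minimum, over all subsets `N ⊆ {1,…,m} \ {i}` with `|N| = m - q - 2`, of
`∑_{j ∈ N} ‖w i - w j‖²` (the sum of squared distances to the `m - q - 2` nearest
neighbors of `w i`). -/
noncomputable def krumScore {m d : ℕ} (q : ℕ)
    (w : Fin m → EuclideanSpace ℝ (Fin d)) (i : Fin m) : ℝ :=
  sInf ((fun N => ∑ j ∈ N, ‖w i - w j‖ ^ 2) ''
    {N : Finset (Fin m) | N ⊆ Finset.univ.erase i ∧ N.card = m - q - 2})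

/-- Proposition 3 (Krum is not dimensional Byzantine-resilient): fix `2q + 2 < m ≤ d`
and let `Krum` be any rule that always outputs an input vector attaining the minimal
Krum score (any fixed tie-breaking). Then for every `g`, every correct vectors
`v_1, …, v_m` and every `C > 0`, there exist `ṽ_1, …, ṽ_m` such that each `ṽ_i`
differs from `v_i` only in its `i`-th coordinate (at most one Byzantine value per
dimension) and `‖Krum(ṽ_1, …, ṽ_m) - g‖² > C`. -/
theorem krum_not_dimensional_byzantine_resilient (m q d : ℕ)
    (hq : 2 * q + 2 < m) (hmd : m ≤ d)
    (Krum : (Fin m → EuclideanSpace ℝ (Fin d)) → EuclideanSpace ℝ (Fin d))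
    (hKrum : ∀ w, ∃ k : Fin m, Krum w = w k ∧ ∀ i, krumScore q w k ≤ krumScore q w i)
    (g : EuclideanSpace ℝ (Fin d)) (v : Fin m → EuclideanSpace ℝ (Fin d))
    (C : ℝ) (hC : 0 < C) :
    ∃ vt : Fin m → EuclideanSpace ℝ (Fin d),
      (∀ (i : Fin m) (j : Fin d), (j : ℕ) ≠ (i : ℕ) → vt i j = v i j) ∧
      ‖Krum vt - g‖ ^ 2 > C := by
  classical
  set B : ℝ := Real.sqrt C + 1 with hB
  refine ⟨fun i => WithLp.toLp 2 (fun j : Fin d => if (j : ℕ) = (i : ℕ) then g j + B else v i j), ?_, ?_⟩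
  · intro i j hj
    simp [hj]
  · obtain ⟨k, hk, -⟩ := hKrum (fun i => WithLp.toLp 2 (fun j : Fin d => if (j : ℕ) = (i : ℕ) then g j + B else v i j))
    rw [hk]
    set w : EuclideanSpace ℝ (Fin d) :=
      WithLp.toLp 2 (fun j : Fin d => if (j : ℕ) = (k : ℕ) then g j + B else v k j) with hw
    have hBpos : 0 < B := by positivity
    have hBC : C < B ^ 2 := by
      have h1 : Real.sqrt C < B := by simp [hB]
      have h2 : Real.sqrt C ^ 2 = C := Real.sq_sqrt hC.le
      nlinarith [Real.sqrt_nonneg C]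
    have hjd : (k : ℕ) < d := lt_of_lt_of_le k.isLt hmd
    set j0 : Fin d := ⟨(k : ℕ), hjd⟩ with hj0
    have hcoord : (w - g) j0 = B := by
      simp [hw, hj0]
    have hnorm : B ^ 2 ≤ ‖w - g‖ ^ 2 := by
      have := EuclideanSpace.norm_eq (w - g)
      rw [this]
      rw [Real.sq_sqrt (by positivity)]
      calc B ^ 2 = ‖(w - g) j0‖ ^ 2 := by rw [hcoord]; simp [abs_of_pos hBpos]
        _ ≤ ∑ j, ‖(w - g) j‖ ^ 2 :=
          Finset.single_le_sum (f := fun j => ‖(w - g) j‖ ^ 2)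
            (fun j _ => by positivity) (Finset.mem_univ j0)
    linarith
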